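/- Let (T,r) be a spanning tree of a finite simple graph G rooted at r, and let {x,y} be an edge of G whose endpoints are incomparable in (T,r), with depth(x) ≥ depth(y). Let w be the deepest common ancestor of x and y, and v the child of w that is an ancestor of y. Let T' be the spanning tree obtained from T by removing the tree edge {w,v} and adding the edge {x,y}. Then, rooting T' at r, every vertex's depth in (T',r) is greater than or equal to its depth in (T,r) (monotonic fall of levels). -/

import Mathlib

/-- `u` lies on the unique path in `T` from `r` to `v`
(characterized in a tree via distances). -/
def IsAncestor {V : Type*} (T : SimpleGraph V) (r u v : V) : Prop :=
  T.dist r u + T.dist u v = T.dist r v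

/-- `u` and `v` are comparable in the rooted tree `(T, r)`. -/
def TreeComparable {V : Type*} (T : SimpleGraph V) (r u v : V) : Prop :=
  IsAncestor T r u v ∨ IsAncestor T r v u


open SimpleGraph

namespace StmtAux

variable {V : Type*} {T : SimpleGraph V} {a b c r s z : V}

lemma walk_lipschitz {H : SimpleGraph V} (h : V → ℕ)
    (hlip : ∀ a b : V, H.Adj a b → h b ≤ h a + 1) :
    ∀ {u z : V} (p : H.Walk u z), h z ≤ h u + p.length := by
  intro u z p
  induction p with
  | nil => simp
  | @cons u v z hadj q ih =>
    have := hlip u v hadj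
    simp only [SimpleGraph.Walk.length_cons]
    omega

lemma adj_dist_le (hc : T.Connected) (hadj : T.Adj a b) (s : V) :
    T.dist s b ≤ T.dist s a + 1 := by
  have h1 := hc.dist_triangle (u := s) (v := a) (w := b)
  have h2 : T.dist a b = 1 := (SimpleGraph.dist_eq_one_iff_adj).2 hadj
  omega

lemma mem_support_dist_le [DecidableEq V] {p : T.Walk r a} (hb : b ∈ p.support) :
    T.dist r b + T.dist b a ≤ p.length := by
  have h1 : T.dist r b ≤ (p.takeUntil b hb).length := SimpleGraph.dist_le _
  have h3 : T.dist b a ≤ (p.dropUntil b hb).length := SimpleGraph.dist_le _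
  have h2 : (p.takeUntil b hb).length + (p.dropUntil b hb).length = p.length := by
    rw [← SimpleGraph.Walk.length_append, SimpleGraph.Walk.take_spec]
  omega

lemma concat_isPath {p : T.Walk r a} (hp : p.IsPath) (hb : b ∉ p.support)
    (hadj : T.Adj a b) : (p.concat hadj).IsPath := by
  rw [SimpleGraph.Walk.isPath_def, SimpleGraph.Walk.support_concat]
  rw [SimpleGraph.Walk.isPath_def] at hp
  simp [List.nodup_append, hp, hb]
  exact fun c hc hcb => hb (hcb ▸ hc)

lemma tree_adj_dist_ne (hT : T.IsTree) (hadj : T.Adj a b) (r : V) :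
    T.dist r a ≠ T.dist r b := by
  classical
  intro he
  have hc := hT.isConnected
  obtain ⟨P, hP, hPl⟩ := hc.exists_path_of_dist r a
  obtain ⟨Q, hQ, hQl⟩ := hc.exists_path_of_dist r b
  have hdba : T.dist b a = 1 := (SimpleGraph.dist_eq_one_iff_adj).2 hadj.symm
  have hbP : b ∉ P.support := fun hb => by
    have := mem_support_dist_le hb; omega
  have heq : P.concat hadj = Q :=
    (hT.existsUnique_path r b).unique (concat_isPath hP hbP hadj) hQ
  have : (P.concat hadj).length = Q.length := by rw [heq]
  rw [SimpleGraph.Walk.length_concat] at this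
  omega

lemma tree_parent_unique (hT : T.IsTree) (hab : T.Adj a b) (hcb : T.Adj c b)
    (ha : T.dist r a + 1 = T.dist r b) (hc' : T.dist r c + 1 = T.dist r b) : a = c := by
  classical
  have hc := hT.isConnected
  obtain ⟨P, hP, hPl⟩ := hc.exists_path_of_dist r a
  obtain ⟨Q, hQ, hQl⟩ := hc.exists_path_of_dist r c
  have hbP : b ∉ P.support := fun hb => by
    have := mem_support_dist_le hb
    have : T.dist b a = 1 := (SimpleGraph.dist_eq_one_iff_adj).2 hab.symm
    omega
  have hbQ : b ∉ Q.support := fun hb => by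
    have := mem_support_dist_le hb
    have : T.dist b c = 1 := (SimpleGraph.dist_eq_one_iff_adj).2 hcb.symm
    omega
  have heq : P.concat hab = Q.concat hcb :=
    (hT.existsUnique_path r b).unique (concat_isPath hP hbP hab) (concat_isPath hQ hbQ hcb)
  have h2 : (P.concat hab).reverse = (Q.concat hcb).reverse := by rw [heq]
  rw [SimpleGraph.Walk.reverse_concat, SimpleGraph.Walk.reverse_concat] at h2
  have h3 := congrArg (fun p => p.getVert 1) h2
  simpa [SimpleGraph.Walk.getVert_cons_succ, SimpleGraph.Walk.getVert_zero] using h3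

lemma tree_adj_dist (hT : T.IsTree) (hadj : T.Adj a b) (r : V) :
    T.dist r b = T.dist r a + 1 ∨ T.dist r a = T.dist r b + 1 := by
  have h1 := adj_dist_le hT.isConnected hadj r
  have h2 := adj_dist_le hT.isConnected hadj.symm r
  have h3 := tree_adj_dist_ne hT hadj r
  omega

lemma exists_parent (hc : T.Connected) (hne : s ≠ z) :
    ∃ p : V, T.Adj z p ∧ T.dist s p + 1 = T.dist s z := by
  obtain ⟨q, hql⟩ := (hc z s).exists_walk_length_eq_dist
  obtain ⟨p, hadj, q', rfl⟩ := SimpleGraph.Walk.exists_eq_cons_of_ne (fun h => hne h.symm) q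
  refine ⟨p, hadj, ?_⟩
  rw [SimpleGraph.Walk.length_cons] at hql
  have h1 : T.dist p s ≤ q'.length := SimpleGraph.dist_le _
  have h2 := adj_dist_le hc hadj.symm s
  have h3 := SimpleGraph.dist_comm (G := T) (u := p) (v := s)
  have h4 := SimpleGraph.dist_comm (G := T) (u := z) (v := s)
  omega

end StmtAux

/-- Let `(T,r)` be a spanning tree of `G` and `{x,y}` an edge of `G` whose endpoints are
incomparable in `(T,r)`, with `depth x ≥ depth y`. Let `w` be the deepest common ancestor of
`x` and `y` and `v` the child of `w` that is an ancestor of `y`. Rooting at `r` the tree `T'`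
obtained by removing the tree edge `{w,v}` and adding `{x,y}`, every vertex's depth in
`(T',r)` is at least its depth in `(T,r)` (monotonic fall of levels). -/
theorem stmt11 {V : Type*} [Fintype V] (G T : SimpleGraph V) (r : V)
    (hTG : T ≤ G) (hT : T.IsTree)
    (x y : V) (hxy : G.Adj x y) (hcross : ¬ TreeComparable T r x y)
    (hdepth : T.dist r y ≤ T.dist r x)
    (w : V) (hwx : IsAncestor T r w x) (hwy : IsAncestor T r w y)
    (hwdeep : ∀ w' : V, IsAncestor T r w' x → IsAncestor T r w' y →
      T.dist r w' ≤ T.dist r w)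
    (v : V) (hv : T.Adj w v) (hwv : IsAncestor T r w v) (hwvne : w ≠ v)
    (hvy : IsAncestor T r v y) :
    ∀ z : V, T.dist r z ≤
      (SimpleGraph.fromEdgeSet ((T.edgeSet \ {s(w, v)}) ∪ {s(x, y)})).dist r z := by
  classical
  intro z
  have hc := hT.isConnected
  set T' := SimpleGraph.fromEdgeSet ((T.edgeSet \ {s(w, v)}) ∪ {s(x, y)}) with hT'def
  have tri : ∀ a b c : V, T.dist a c ≤ T.dist a b + T.dist b c :=
    fun a b c => hc.dist_triangle
  have dcomm : ∀ a b : V, T.dist a b = T.dist b a := fun a b => SimpleGraph.dist_comm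
  have dzero : ∀ a b : V, T.dist a b = 0 ↔ a = b := fun a b => hc.dist_eq_zero_iff
  have dself : ∀ a : V, T.dist a a = 0 := fun a => SimpleGraph.dist_self
  have dwv : T.dist w v = 1 := (SimpleGraph.dist_eq_one_iff_adj).2 hv
  have drv : T.dist r v = T.dist r w + 1 := by
    have h := hwv; unfold IsAncestor at h; omega
  have hvv : IsAncestor T r v v := by
    unfold IsAncestor; rw [dself]; omega
  have hAnotR : ¬ IsAncestor T r v r := by
    intro h
    unfold IsAncestor at h
    have h0 := dself r
    have h1 : T.dist r v = 0 := by omega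
    have h2 := (dzero r v).1 (by rw [dcomm] at h1; rw [dcomm]; exact h1)
    omega
  have hAx : ¬ IsAncestor T r v x := by
    intro h
    have := hwdeep v h hvy
    omega
  have hAw : ¬ IsAncestor T r v w := by
    intro h
    unfold IsAncestor at h
    rw [dcomm v w] at h
    omega
  have hxyne : x ≠ y := hxy.ne
  have hA_up : ∀ p q : V, IsAncestor T r v p → T.Adj p q →
      T.dist r q = T.dist r p + 1 → IsAncestor T r v q := by
    intro p q hp hadj hd
    unfold IsAncestor at hp ⊢
    have h1 := tri r v q
    have h2 := StmtAux.adj_dist_le hc hadj v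
    omega
  -- the unique crossing edge is {w, v}
  have cross : ∀ a b : V, T.Adj a b → IsAncestor T r v b → ¬ IsAncestor T r v a →
      a = w ∧ b = v := by
    intro a b hadj hb ha
    unfold IsAncestor at hb ha
    have h5 := StmtAux.tree_adj_dist hT hadj r
    have htri_a := tri r v a
    have hlt : T.dist r a < T.dist r v + T.dist v a :=
      lt_of_le_of_ne htri_a (fun h => ha h.symm)
    have hvb_a : T.dist v a ≤ T.dist v b + 1 := StmtAux.adj_dist_le hc hadj.symm v
    have hcase : T.dist r a + 1 = T.dist r b := by
      rcases h5 with h5 | h5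
      · omega
      · omega
    by_cases hbv : b = v
    · subst hbv
      have haw : a = w := StmtAux.tree_parent_unique (r := r) hT hadj hv (by omega) (by omega)
      exact ⟨haw, rfl⟩
    · exfalso
      have hvbne : v ≠ b := fun h => hbv h.symm
      obtain ⟨p, hpb, hpd⟩ := StmtAux.exists_parent hc hvbne
      have hrp_le : T.dist r p ≤ T.dist r v + T.dist v p := tri r v p
      have hrp_ge : T.dist r b ≤ T.dist r p + 1 := StmtAux.adj_dist_le hc hpb.symm r
      have hrp : T.dist r p + 1 = T.dist r b := by omega
      have hap : a = p := StmtAux.tree_parent_unique hT hadj hpb.symm hcase hrp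
      subst hap
      omega
  -- reachability in T'
  have edge_of : ∀ p q : V, T.Adj p q → s(p, q) ≠ s(w, v) → T'.Adj p q := by
    intro p q hadj hne
    rw [hT'def, SimpleGraph.fromEdgeSet_adj]
    refine ⟨Or.inl ⟨(T.mem_edgeSet).2 hadj, ?_⟩, hadj.ne⟩
    simpa using hne
  have reach1 : ∀ n, ∀ u : V, T.dist r u ≤ n → ¬ IsAncestor T r v u → T'.Reachable r u := by
    intro n
    induction n with
    | zero =>
      intro u hu _
      have : r = u := (dzero r u).1 (Nat.le_zero.mp hu)
      subst this
      exact SimpleGraph.Reachable.refl r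
    | succ n ih =>
      intro u hu hAu
      by_cases hur : r = u
      · subst hur; exact SimpleGraph.Reachable.refl r
      · obtain ⟨p, hpu, hpd⟩ := StmtAux.exists_parent hc hur
        have hAp : ¬ IsAncestor T r v p := fun hp => hAu (hA_up p u hp hpu.symm (by omega))
        have hrp : T'.Reachable r p := ih p (by omega) hAp
        have hedge : T'.Adj p u := by
          refine edge_of p u hpu.symm ?_
          intro hmem
          rw [Sym2.eq_iff] at hmem
          rcases hmem with ⟨hp1, hu1⟩ | ⟨hp1, hu1⟩
          · exact hAu (hu1 ▸ hvv)
          · exact hAp (hp1 ▸ hvv)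
        exact hrp.trans hedge.reachable
  have reachy : T'.Reachable r y := by
    have hx : T'.Reachable r x := reach1 _ x le_rfl hAx
    refine hx.trans (SimpleGraph.Adj.reachable ?_)
    rw [hT'def, SimpleGraph.fromEdgeSet_adj]
    exact ⟨Or.inr rfl, hxyne⟩
  have reach2 : ∀ n, ∀ u : V, T.dist y u ≤ n → IsAncestor T r v u → T'.Reachable r u := by
    intro n
    induction n with
    | zero =>
      intro u hu _
      have : y = u := (dzero y u).1 (Nat.le_zero.mp hu)
      subst this
      exact reachy
    | succ n ih =>
      intro u hu hAu
      by_cases huy : y = u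
      · subst huy; exact reachy
      · obtain ⟨p, hpu, hpd⟩ := StmtAux.exists_parent hc huy
        have hedge : T'.Adj p u := by
          refine edge_of p u hpu.symm ?_
          intro hmem
          rw [Sym2.eq_iff] at hmem
          rcases hmem with ⟨hp1, hu1⟩ | ⟨hp1, hu1⟩
          · -- p = w, u = v : but dist y w = dist y v + 1
            rw [hp1, hu1] at hpd
            have e1 := hvy; have e2 := hwy
            unfold IsAncestor at e1 e2
            rw [dcomm y w, dcomm y v] at hpd
            omega
          · -- u = w : contradicts hAu with hAw
            exact hAw (hu1 ▸ hAu)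
        have hreach_p : T'.Reachable r p := by
          by_cases hAp : IsAncestor T r v p
          · exact ih p (by omega) hAp
          · exact reach1 (T.dist r p) p le_rfl hAp
        exact hreach_p.trans hedge.reachable
  have reachAll : ∀ u : V, T'.Reachable r u := by
    intro u
    by_cases hA : IsAncestor T r v u
    · exact reach2 _ u le_rfl hA
    · exact reach1 _ u le_rfl hA
  -- the potential function
  set h : V → ℕ := fun u =>
    if IsAncestor T r v u then T.dist r x + 1 + T.dist y u else T.dist r u with hhdef
  have hpos : ∀ u, IsAncestor T r v u → h u = T.dist r x + 1 + T.dist y u :=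
    fun u hu => if_pos hu
  have hneg : ∀ u, ¬ IsAncestor T r v u → h u = T.dist r u := fun u hu => if_neg hu
  have hr0 : h r = 0 := by rw [hneg r hAnotR, dself]
  have hlb : T.dist r z ≤ h z := by
    by_cases hA : IsAncestor T r v z
    · rw [hpos z hA]
      have h1 := tri r y z
      omega
    · rw [hneg z hA]
  have hlip : ∀ a b : V, T'.Adj a b → h b ≤ h a + 1 := by
    intro a b hab
    rw [hT'def, SimpleGraph.fromEdgeSet_adj] at hab
    obtain ⟨hm, hne⟩ := hab
    rw [Set.mem_union, Set.mem_diff, Set.mem_singleton_iff, Set.mem_singleton_iff] at hm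
    rcases hm with ⟨hmT, hnot⟩ | hm
    · have hadj : T.Adj a b := (T.mem_edgeSet).1 hmT
      by_cases ha : IsAncestor T r v a <;> by_cases hb : IsAncestor T r v b
      · rw [hpos a ha, hpos b hb]
        have := StmtAux.adj_dist_le hc hadj y
        omega
      · exfalso
        obtain ⟨hb', ha'⟩ := cross b a hadj.symm ha hb
        exact hnot (by rw [ha', hb']; exact Sym2.eq_swap)
      · exfalso
        obtain ⟨ha', hb'⟩ := cross a b hadj hb ha
        rw [ha', hb'] at hnot
        exact hnot rfl
      · rw [hneg a ha, hneg b hb]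
        exact StmtAux.adj_dist_le hc hadj r
    · rw [Sym2.eq_iff] at hm
      rcases hm with ⟨ha', hb'⟩ | ⟨ha', hb'⟩
      · rw [ha', hb', hpos y hvy, hneg x hAx, dself]
      · rw [ha', hb', hneg x hAx, hpos y hvy, dself]
        omega
  obtain ⟨p, hpl⟩ := (reachAll z).exists_walk_length_eq_dist
  have hfin := StmtAux.walk_lipschitz h hlip p
  rw [hpl, hr0] at hfin
  omega
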